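/- Let x_0 = Σ_{r<R} φ_r v_r where the v_r are eigenvectors of A with distinct eigenvalues λ_r, all φ_r ≠ 0, and the v_r are linearly independent. If m ≥ R, then the snapshot matrix X = [x_0, A x_0, ..., A^{m−1} x_0] has rank exactly R. -/

import Mathlib

open Matrix


/-- If `x₀ = Σ_r φ_r v_r` with `v_r` linearly independent eigenvectors of `A` whose
eigenvalues `λ_r` are pairwise distinct and nonzero, all `φ_r ≠ 0`, and `m ≥ R`, then
the snapshot matrix `X = [x₀, A x₀, ..., A^{m-1} x₀]` has rank exactly `R`. -/
theorem snapshot_matrix_rank {n m R : ℕ}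
    (A : Matrix (Fin n) (Fin n) ℂ)
    (v : Fin R → Fin n → ℂ) (lam : Fin R → ℂ) (φ : Fin R → ℂ)
    (heig : ∀ r, A.mulVec (v r) = lam r • v r)
    (hdist : Function.Injective lam)
    (hlam0 : ∀ r, lam r ≠ 0)
    (hφ : ∀ r, φ r ≠ 0)
    (hv : LinearIndependent ℂ v)
    (hm : R ≤ m)
    (x0 : Fin n → ℂ)
    (hx0 : x0 = ∑ r, φ r • v r)
    (X : Matrix (Fin n) (Fin m) ℂ)
    (hX : ∀ k : Fin m, (fun i => X i k) = (A ^ (k : ℕ)).mulVec x0) :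
    X.rank = R := by
  classical
  -- powers act by eigenvalue powers
  have hpow : ∀ (k : ℕ) (r : Fin R), (A ^ k).mulVec (v r) = lam r ^ k • v r := by
    intro k r
    induction k with
    | zero => simp [Matrix.one_mulVec]
    | succ k ih =>
        rw [pow_succ, ← Matrix.mulVec_mulVec, heig, Matrix.mulVec_smul, ih,
          smul_smul, pow_succ]
        ring_nf
  -- columns of X
  have colX : ∀ k : Fin m, Xᵀ k = ∑ r, (lam r ^ (k : ℕ) * φ r) • v r := by
    intro k
    have h1 : Xᵀ k = (fun i => X i k) := rfl
    rw [h1, hX, hx0]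
    rw [show (A ^ (k : ℕ)).mulVec (∑ r, φ r • v r)
        = (A ^ (k : ℕ)).mulVecLin (∑ r, φ r • v r) from rfl, map_sum]
    refine Finset.sum_congr rfl fun r _ => ?_
    rw [_root_.map_smul, Matrix.mulVecLin_apply, hpow, smul_smul]
    ring_nf
  -- the Vandermonde-type coefficient matrix
  set M : Matrix (Fin R) (Fin R) ℂ := fun j r => lam r ^ (j : ℕ) * φ r with hM
  have hMdet : M.det ≠ 0 := by
    have hMeq : M = (Matrix.vandermonde lam)ᵀ * Matrix.diagonal φ := by
      funext j r
      simp [hM, Matrix.mul_apply, Matrix.diagonal_apply, Matrix.vandermonde]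
    rw [hMeq, Matrix.det_mul, Matrix.det_transpose, Matrix.det_diagonal]
    exact mul_ne_zero (Matrix.det_vandermonde_ne_zero_iff.mpr hdist)
      (Finset.prod_ne_zero_iff.mpr fun r _ => hφ r)
  have hMinv : M⁻¹ * M = 1 := Matrix.nonsing_inv_mul M (Ne.isUnit hMdet)
  -- each v r is a combination of the first R columns
  have key : ∀ r : Fin R, v r = ∑ j : Fin R, M⁻¹ r j • Xᵀ (Fin.castLE hm j) := by
    intro r
    have : ∀ j : Fin R, Xᵀ (Fin.castLE hm j) = ∑ s, M j s • v s := by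
      intro j
      rw [colX]
      rfl
    calc v r = ∑ s, (M⁻¹ * M) r s • v s := by
            rw [hMinv]
            simp [Matrix.one_apply]
      _ = ∑ s, (∑ j, M⁻¹ r j * M j s) • v s := by
            refine Finset.sum_congr rfl fun s _ => ?_
            rw [Matrix.mul_apply]
      _ = ∑ s, ∑ j, (M⁻¹ r j * M j s) • v s := by
            refine Finset.sum_congr rfl fun s _ => ?_
            rw [Finset.sum_smul]
      _ = ∑ j, ∑ s, (M⁻¹ r j * M j s) • v s := Finset.sum_comm
      _ = ∑ j : Fin R, M⁻¹ r j • Xᵀ (Fin.castLE hm j) := by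
            refine Finset.sum_congr rfl fun j _ => ?_
            rw [this, Finset.smul_sum]
            refine Finset.sum_congr rfl fun s _ => ?_
            rw [smul_smul]
  -- column span equals span of the eigenvectors
  have hspan : Submodule.span ℂ (Set.range Xᵀ) = Submodule.span ℂ (Set.range v) := by
    apply le_antisymm
    · rw [Submodule.span_le]
      rintro _ ⟨k, rfl⟩
      rw [colX]
      exact Submodule.sum_mem _ fun r _ => Submodule.smul_mem _ _
        (Submodule.subset_span ⟨r, rfl⟩)
    · rw [Submodule.span_le]
      rintro _ ⟨r, rfl⟩
      rw [key r]
      exact Submodule.sum_mem _ fun j _ => Submodule.smul_mem _ _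
        (Submodule.subset_span ⟨Fin.castLE hm j, rfl⟩)
  rw [Matrix.rank, Matrix.range_mulVecLin, show X.col = Xᵀ from rfl, hspan, finrank_span_eq_card hv,
    Fintype.card_fin]
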